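/- Fix H_0, H_1, …, H_d ∈ (0,1) with 2H_0 + Σ_{i=1}^d H_i < d + 1. Then the integral over the unit polydisc ∫_{|λ|≤1} ∫_{|ξ_1|≤1} ⋯ ∫_{|ξ_d|≤1} (|λ|^{2H_0−1} ∏_{i=1}^d |ξ_i|^{2H_i−1})^{-1} · (|ξ|² + 2|λ|)^{-1} dλ dξ is finite. -/
import Mathlib
open MeasureTheory Set

lemma abs_rpow_integrableOn {a : ℝ} (ha : -1 < a) :
    IntegrableOn (fun x : ℝ => |x| ^ a) (Set.Icc (-1:ℝ) 1) volume := by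
  have h01 : IntegrableOn (fun x : ℝ => |x| ^ a) (Set.Icc (0:ℝ) 1) volume := by
    have h := intervalIntegral.intervalIntegrable_rpow' (a := 0) (b := 1) ha
    rw [intervalIntegrable_iff_integrableOn_Ioc_of_le zero_le_one] at h
    have h2 : IntegrableOn (fun x : ℝ => |x| ^ a) (Set.Ioc (0:ℝ) 1) volume :=
      h.congr_fun (fun x hx => by rw [abs_of_pos hx.1]) measurableSet_Ioc
    exact h2.congr_set_ae (Ioc_ae_eq_Icc (μ := volume) (a := (0:ℝ)) (b := 1)).symm
  have hneg : IntegrableOn (fun x : ℝ => |x| ^ a) (Set.Icc (-1:ℝ) 0) volume := by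
    have hemb : MeasurableEmbedding (fun x : ℝ => -x) :=
      (Homeomorph.neg ℝ).isClosedEmbedding.measurableEmbedding
    have hmap : (volume : Measure ℝ).restrict (Set.Icc (-1:ℝ) 0)
        = Measure.map (fun x : ℝ => -x) ((volume : Measure ℝ).restrict (Set.Icc (0:ℝ) 1)) := by
      rw [← Measure.map_neg_eq_self (volume : Measure ℝ)]
      rw [Measure.restrict_map measurable_neg measurableSet_Icc]
      congr 1
      ext x
      simp [neg_le, le_neg, and_comm]
    rw [IntegrableOn, hmap, hemb.integrable_map_iff]
    exact h01.congr_fun (fun x _ => by simp) measurableSet_Icc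
  have := hneg.union h01
  rwa [Set.Icc_union_Icc_eq_Icc (by norm_num) (by norm_num)] at this

/-- If H_0, H_1, …, H_d ∈ (0,1) with 2H_0 + ΣH_i < d + 1, the integral over the unit
polydisc of (|λ|^{2H_0−1} ∏|ξ_i|^{2H_i−1})⁻¹ (|ξ|² + 2|λ|)⁻¹ dλ dξ is finite. -/
theorem integrable_on_polydisc
    (d : ℕ) (H0 : ℝ) (H : Fin d → ℝ)
    (h0 : H0 ∈ Set.Ioo (0:ℝ) 1) (h : ∀ i, H i ∈ Set.Ioo (0:ℝ) 1)
    (hcrit : 2 * H0 + ∑ i, H i < d + 1) :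
    IntegrableOn
      (fun p : ℝ × (Fin d → ℝ) =>
        (|p.1| ^ (2 * H0 - 1) * ∏ i, |p.2 i| ^ (2 * H i - 1))⁻¹
          * ((∑ i, (p.2 i) ^ 2) + 2 * |p.1|)⁻¹)
      (Set.Icc (-1:ℝ) 1 ×ˢ Set.univ.pi fun _ : Fin d => Set.Icc (-1:ℝ) 1)
      volume := by
  -- Choose weights
  set S : ℝ := 2 - 2 * H0 + ∑ i, (1 - H i) with hS_def
  have hsum : ∑ i, (1 - H i) = (d : ℝ) - ∑ i, H i := by
    rw [Finset.sum_sub_distrib]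
    simp
  have hS1 : 1 < S := by
    rw [hS_def, hsum]; linarith
  have hS0 : 0 < S := by linarith
  set τ0 : ℝ := (2 - 2 * H0) / S with hτ0_def
  set τ : Fin d → ℝ := fun i => (1 - H i) / S with hτ_def
  have hτ0pos : 0 < τ0 := div_pos (by linarith [h0.2]) hS0
  have hτpos : ∀ i, 0 < τ i := fun i => div_pos (by linarith [(h i).2]) hS0
  have hτsum : τ0 + ∑ i, τ i = 1 := by
    rw [hτ0_def, hτ_def, ← Finset.sum_div, ← add_div]
    exact div_self (by linarith)
  have hτ0lt : τ0 < 2 - 2 * H0 := div_lt_self (by linarith [h0.2]) hS1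
  have hτlt : ∀ i, τ i < 1 - H i := fun i => div_lt_self (by linarith [(h i).2]) hS1
  set a0 : ℝ := 1 - 2 * H0 - τ0 with ha0_def
  set aa : Fin d → ℝ := fun i => 1 - 2 * H i - 2 * τ i with haa_def
  have ha0 : -1 < a0 := by rw [ha0_def]; linarith
  have haa : ∀ i, -1 < aa i := fun i => by simp only [haa_def]; linarith [hτlt i]
  -- the dominating function
  set F0 : ℝ → ℝ := (Set.Icc (-1:ℝ) 1).indicator (fun x => |x| ^ a0) with hF0_def
  set F : Fin d → ℝ → ℝ := fun i => (Set.Icc (-1:ℝ) 1).indicator (fun x => |x| ^ aa i) with hF_def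
  have hF0int : Integrable F0 volume :=
    (abs_rpow_integrableOn ha0).integrable_indicator measurableSet_Icc
  have hFint : ∀ i, Integrable (F i) volume := fun i =>
    (abs_rpow_integrableOn (haa i)).integrable_indicator measurableSet_Icc
  have hGint : Integrable (fun x : Fin d → ℝ => ∏ i, F i (x i)) volume :=
    Integrable.fintype_prod hFint
  have hgint : Integrable (fun p : ℝ × (Fin d → ℝ) => F0 p.1 * ∏ i, F i (p.2 i)) volume := by
    rw [Measure.volume_eq_prod]
    exact hF0int.mul_prod hGint
  set μ := (volume : Measure (ℝ × (Fin d → ℝ))).restrict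
      (Set.Icc (-1:ℝ) 1 ×ˢ Set.univ.pi fun _ : Fin d => Set.Icc (-1:ℝ) 1) with hμ_def
  refine Integrable.mono hgint.integrableOn ?_ ?_
  · -- measurability
    apply Measurable.aestronglyMeasurable
    fun_prop
  · -- a.e. bound
    have hae1 : ∀ᵐ p : ℝ × (Fin d → ℝ) ∂μ, p.1 ≠ 0 := by
      refine ae_restrict_of_ae ?_
      rw [ae_iff]
      have hset : {p : ℝ × (Fin d → ℝ) | ¬ p.1 ≠ 0}
          = ({(0:ℝ)} : Set ℝ) ×ˢ (univ : Set (Fin d → ℝ)) := by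
        ext p
        simp only [mem_setOf_eq, not_not, Set.mem_prod, Set.mem_singleton_iff, Set.mem_univ,
          and_true]
      rw [hset, Measure.volume_eq_prod, Measure.prod_prod]
      simp
    have hae2 : ∀ᵐ p : ℝ × (Fin d → ℝ) ∂μ, ∀ i, p.2 i ≠ 0 := by
      refine ae_restrict_of_ae ?_
      have hx : ∀ᵐ x : Fin d → ℝ ∂(volume : Measure (Fin d → ℝ)), ∀ i, x i ≠ 0 := by
        rw [ae_all_iff]
        intro i
        rw [volume_pi]
        exact Measure.ae_eval_ne _ i 0
      rw [ae_iff] at hx ⊢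
      have hset : {p : ℝ × (Fin d → ℝ) | ¬ ∀ i, p.2 i ≠ 0}
          = (univ : Set ℝ) ×ˢ {x : Fin d → ℝ | ¬ ∀ i, x i ≠ 0} := by
        ext p
        simp only [mem_setOf_eq, Set.mem_prod, Set.mem_univ, true_and]
      rw [hset, Measure.volume_eq_prod, Measure.prod_prod, hx, mul_zero]
    filter_upwards [ae_restrict_mem ((measurableSet_Icc).prod (MeasurableSet.univ_pi
        fun _ => measurableSet_Icc)), hae1, hae2] with p hp hl hx
    obtain ⟨hp1, hp2⟩ := hp
    show ‖(|p.1| ^ (2 * H0 - 1) * ∏ i, |p.2 i| ^ (2 * H i - 1))⁻¹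
          * ((∑ i, (p.2 i) ^ 2) + 2 * |p.1|)⁻¹‖ ≤ ‖F0 p.1 * ∏ i, F i (p.2 i)‖
    have hL : (0:ℝ) < |p.1| := abs_pos.2 hl
    have hX : ∀ i, (0:ℝ) < |p.2 i| := fun i => abs_pos.2 (hx i)
    have hsum0 : (0:ℝ) ≤ ∑ i, (p.2 i) ^ 2 := Finset.sum_nonneg fun i _ => sq_nonneg _
    have hs : (0:ℝ) < (∑ i, (p.2 i) ^ 2) + 2 * |p.1| := by linarith
    have hA : (0:ℝ) < |p.1| ^ (2 * H0 - 1) * ∏ i, |p.2 i| ^ (2 * H i - 1) :=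
      mul_pos (Real.rpow_pos_of_pos hL _)
        (Finset.prod_pos fun i _ => Real.rpow_pos_of_pos (hX i) _)
    have hB : (0:ℝ) < |p.1| ^ τ0 * ∏ i, |p.2 i| ^ (2 * τ i) :=
      mul_pos (Real.rpow_pos_of_pos hL _)
        (Finset.prod_pos fun i _ => Real.rpow_pos_of_pos (hX i) _)
    have hBs : |p.1| ^ τ0 * ∏ i, |p.2 i| ^ (2 * τ i) ≤ (∑ i, (p.2 i) ^ 2) + 2 * |p.1| := by
      have h1 : |p.1| ^ τ0 ≤ ((∑ i, (p.2 i) ^ 2) + 2 * |p.1|) ^ τ0 :=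
        Real.rpow_le_rpow hL.le (by linarith) hτ0pos.le
      have h2 : ∀ i, |p.2 i| ^ (2 * τ i) ≤ ((∑ i, (p.2 i) ^ 2) + 2 * |p.1|) ^ τ i := by
        intro i
        have e : |p.2 i| ^ (2 * τ i) = ((p.2 i) ^ 2) ^ τ i := by
          rw [← sq_abs, ← Real.rpow_natCast |p.2 i| 2, ← Real.rpow_mul (abs_nonneg _)]
          norm_num
        rw [e]
        refine Real.rpow_le_rpow (sq_nonneg _) ?_ (hτpos i).le
        have h3 : (p.2 i) ^ 2 ≤ ∑ j, (p.2 j) ^ 2 :=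
          Finset.single_le_sum (f := fun j => (p.2 j) ^ 2)
            (fun j _ => sq_nonneg (p.2 j)) (Finset.mem_univ i)
        linarith
      calc |p.1| ^ τ0 * ∏ i, |p.2 i| ^ (2 * τ i)
          ≤ ((∑ i, (p.2 i) ^ 2) + 2 * |p.1|) ^ τ0
              * ∏ i, ((∑ i, (p.2 i) ^ 2) + 2 * |p.1|) ^ τ i := by
            refine mul_le_mul h1 (Finset.prod_le_prod
              (fun i _ => (Real.rpow_pos_of_pos (hX i) _).le) (fun i _ => h2 i))
              (Finset.prod_nonneg fun i _ => (Real.rpow_pos_of_pos (hX i) _).le)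
              (Real.rpow_nonneg hs.le _)
        _ = ((∑ i, (p.2 i) ^ 2) + 2 * |p.1|) ^ (τ0 + ∑ i, τ i) := by
            rw [← Real.rpow_sum_of_pos hs, ← Real.rpow_add hs]
        _ = (∑ i, (p.2 i) ^ 2) + 2 * |p.1| := by rw [hτsum, Real.rpow_one]
    have key : ((∑ i, (p.2 i) ^ 2) + 2 * |p.1|)⁻¹
        ≤ (|p.1| ^ τ0 * ∏ i, |p.2 i| ^ (2 * τ i))⁻¹ := inv_anti₀ hB hBs
    have hgval : F0 p.1 * ∏ i, F i (p.2 i) = |p.1| ^ a0 * ∏ i, |p.2 i| ^ aa i := by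
      have e0 : F0 p.1 = |p.1| ^ a0 := indicator_of_mem hp1 _
      have ei : ∀ i, F i (p.2 i) = |p.2 i| ^ aa i := fun i =>
        indicator_of_mem (hp2 i (Set.mem_univ i)) _
      rw [e0, Finset.prod_congr rfl fun i _ => ei i]
    have hR : (|p.1| ^ (2 * H0 - 1) * ∏ i, |p.2 i| ^ (2 * H i - 1))⁻¹
          * (|p.1| ^ τ0 * ∏ i, |p.2 i| ^ (2 * τ i))⁻¹
        = |p.1| ^ a0 * ∏ i, |p.2 i| ^ aa i := by
      rw [← mul_inv, mul_mul_mul_comm, ← Real.rpow_add hL, ← Finset.prod_mul_distrib]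
      have hprod : (∏ i, |p.2 i| ^ (2 * H i - 1) * |p.2 i| ^ (2 * τ i))
          = ∏ i, |p.2 i| ^ (2 * H i - 1 + 2 * τ i) :=
        Finset.prod_congr rfl fun i _ => (Real.rpow_add (hX i) _ _).symm
      rw [hprod, mul_inv, ← Real.rpow_neg hL.le, ← Finset.prod_inv_distrib]
      congr 1
      · congr 1
        rw [ha0_def]; ring
      · refine Finset.prod_congr rfl fun i _ => ?_
        rw [← Real.rpow_neg (hX i).le]
        congr 1
        simp only [haa_def]; ring
    have hfnn : (0:ℝ) ≤ (|p.1| ^ (2 * H0 - 1) * ∏ i, |p.2 i| ^ (2 * H i - 1))⁻¹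
        * ((∑ i, (p.2 i) ^ 2) + 2 * |p.1|)⁻¹ :=
      mul_nonneg (inv_nonneg.2 hA.le) (inv_nonneg.2 hs.le)
    have hgnn : (0:ℝ) ≤ F0 p.1 * ∏ i, F i (p.2 i) := by
      rw [hgval]
      exact mul_nonneg (Real.rpow_nonneg (abs_nonneg _) _)
        (Finset.prod_nonneg fun i _ => Real.rpow_nonneg (abs_nonneg _) _)
    rw [Real.norm_eq_abs, Real.norm_eq_abs, abs_of_nonneg hfnn, abs_of_nonneg hgnn, hgval, ← hR]
    exact mul_le_mul_of_nonneg_left key (inv_nonneg.2 hA.le)
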